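/- Under Assumptions 1–3 on the model, the belief sequences converge to a consensus: there exists a scalar random variable x̄ such that, with probability one, lim_{k→∞} x_i(k) = x̄ for every agent i. Moreover x̄ is a convex combination of the initial beliefs: x̄ = Σ_{j=1}^n π_j x_j(0), where π = (π_1,…,π_n) is a random vector with π_j ≥ 0 for all j and Σ_j π_j = 1. -/

import Mathlib

open MeasureTheory ProbabilityTheory Matrix Filter

noncomputable section

instance matMeas {n : ℕ} : MeasurableSpace (Matrix (Fin n) (Fin n) ℝ) := MeasurableSpace.pi

/-- the standard basis vector `e_i`. -/
def eVec {n : ℕ} (i : Fin n) : Fin n → ℝ := fun k => if k = i then 1 else 0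

/-- `A_{ij} = I − (e_i−e_j)(e_i−e_j)ᵀ/2` : pairwise averaging matrix. -/
def Amat {n : ℕ} (i j : Fin n) : Matrix (Fin n) (Fin n) ℝ :=
  1 - (2⁻¹ : ℝ) • Matrix.vecMulVec (eVec i - eVec j) (eVec i - eVec j)

/-- `J_{ij} = I − (1−ε) e_i (e_i−e_j)ᵀ` : influence matrix. -/
def Jmat {n : ℕ} (ε : ℝ) (i j : Fin n) : Matrix (Fin n) (Fin n) ℝ :=
  1 - (1 - ε) • Matrix.vecMulVec (eVec i) (eVec i - eVec j)

/-- the common law of the update matrices `W(k)` : with probability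
`p_ij β_ij / n` it is `A_ij`, with probability `p_ij α_ij / n` it is `J_ij`,
and with probability `Σ_{i,j} p_ij γ_ij / n` it is the identity. -/
def lawW {n : ℕ} (p α β γ : Fin n → Fin n → ℝ) (ε : ℝ) : Measure (Matrix (Fin n) (Fin n) ℝ) :=
  ∑ i, ∑ j,
    (ENNReal.ofReal (p i j * β i j / n) • Measure.dirac (Amat i j) +
     ENNReal.ofReal (p i j * α i j / n) • Measure.dirac (Jmat ε i j) +
     ENNReal.ofReal (p i j * γ i j / n) • Measure.dirac (1 : Matrix (Fin n) (Fin n) ℝ))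

/-- `isPath E i j L` : there is a directed path of length `L` from `i` to `j`. -/
def isPath {n : ℕ} (E : Fin n → Fin n → Prop) (i j : Fin n) (L : ℕ) : Prop :=
  ∃ f : ℕ → Fin n, f 0 = i ∧ f L = j ∧ ∀ l < L, E (f l) (f (l + 1))

def StochM {n : ℕ} (M : Matrix (Fin n) (Fin n) ℝ) : Prop :=
  (∀ i j, 0 ≤ M i j) ∧ ∀ i, ∑ j, M i j = 1

variable {n : ℕ}

lemma Amat_apply (i j k l : Fin n) :
    Amat i j k l = (if k = l then (1:ℝ) else 0) -
      2⁻¹ * (((if k = i then (1:ℝ) else 0) - if k = j then 1 else 0) *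
             ((if l = i then (1:ℝ) else 0) - if l = j then 1 else 0)) := by
  simp [Amat, Matrix.sub_apply, Matrix.smul_apply, Matrix.vecMulVec_apply, Matrix.one_apply,
    eVec, Pi.sub_apply]

lemma Jmat_apply (ε : ℝ) (i j k l : Fin n) :
    Jmat ε i j k l = (if k = l then (1:ℝ) else 0) -
      (1 - ε) * ((if k = i then (1:ℝ) else 0) *
             ((if l = i then (1:ℝ) else 0) - if l = j then 1 else 0)) := by
  simp [Jmat, Matrix.sub_apply, Matrix.smul_apply, Matrix.vecMulVec_apply, Matrix.one_apply,
    eVec, Pi.sub_apply]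

lemma stoch_one : StochM (1 : Matrix (Fin n) (Fin n) ℝ) := by
  constructor
  · intro i j; by_cases h : i = j <;> simp [Matrix.one_apply, h]
  · intro i; simp [Matrix.one_apply]

lemma stoch_mul {M P : Matrix (Fin n) (Fin n) ℝ} (hM : StochM M) (hP : StochM P) :
    StochM (M * P) := by
  constructor
  · intro i j
    rw [Matrix.mul_apply]
    exact Finset.sum_nonneg fun l _ => mul_nonneg (hM.1 i l) (hP.1 l j)
  · intro i
    simp only [Matrix.mul_apply]
    rw [Finset.sum_comm]
    calc ∑ l, ∑ j, M i l * P l j = ∑ l, M i l * ∑ j, P l j := by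
          simp [Finset.mul_sum]
      _ = 1 := by simp [hP.2, hM.2 i]

lemma stoch_Amat (i j : Fin n) : StochM (Amat i j) := by
  constructor
  · intro k l
    rw [Amat_apply]
    split_ifs <;> simp_all <;> norm_num
  · intro k
    simp only [Amat_apply]
    rw [Finset.sum_sub_distrib]
    have : ∑ l : Fin n, (((if l = i then (1:ℝ) else 0) - if l = j then 1 else 0)) = 0 := by
      rw [Finset.sum_sub_distrib]; simp
    simp only [← mul_assoc]
    rw [← Finset.mul_sum, this, mul_zero, sub_zero]
    simp

lemma stoch_Jmat {ε : ℝ} (hε0 : 0 < ε) (hε : ε ≤ 1/2) (i j : Fin n) : StochM (Jmat ε i j) := by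
  constructor
  · intro k l
    rw [Jmat_apply]
    split_ifs <;> simp_all <;> norm_num <;> linarith
  · intro k
    simp only [Jmat_apply]
    rw [Finset.sum_sub_distrib]
    have : ∀ k' : Fin n, ∑ l, (1-ε) * ((if k' = i then (1:ℝ) else 0) *
             ((if l = i then (1:ℝ) else 0) - if l = j then 1 else 0)) = 0 := by
      intro k'
      rw [← Finset.mul_sum, ← Finset.mul_sum, Finset.sum_sub_distrib]
      simp
    rw [this k]
    have h2 : ∑ l : Fin n, (if k = l then (1:ℝ) else 0) = 1 := by simp
    rw [h2]; ring

lemma Amat_diag {ε : ℝ} (hε : ε ≤ 1/2) (i j k : Fin n) : ε ≤ Amat i j k k := by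
  rw [Amat_apply]; split_ifs <;> first | linarith | (exact absurd rfl (by assumption))

lemma Amat_edge {ε : ℝ} (hε : ε ≤ 1/2) {i j : Fin n} (hij : i ≠ j) : ε ≤ Amat i j i j := by
  simp [Amat_apply, hij, hij.symm]; linarith

lemma Jmat_diag {ε : ℝ} (hε0 : 0 < ε) (hε : ε ≤ 1/2) (i j k : Fin n) : ε ≤ Jmat ε i j k k := by
  rw [Jmat_apply]; split_ifs <;> first | linarith | (exact absurd rfl (by assumption))

lemma Jmat_edge {ε : ℝ} (hε : ε ≤ 1/2) {i j : Fin n} (hij : i ≠ j) : ε ≤ Jmat ε i j i j := by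
  simp [Jmat_apply, hij, hij.symm]; linarith

/-- a "good" update matrix for edge (u,v): stochastic, diagonal ≥ ε, entry (u,v) ≥ ε. -/
def GoodM (ε : ℝ) (u v : Fin n) (M : Matrix (Fin n) (Fin n) ℝ) : Prop :=
  StochM M ∧ (∀ k, ε ≤ M k k) ∧ ε ≤ M u v

/-- chain of influence steps: each edge's head must already be in the reached set;
its tail is added. -/
def ChainP (E : Fin n → Fin n → Prop) : Set (Fin n) → List (Fin n × Fin n) → Set (Fin n) → Prop
  | S, [], S' => S' = S
  | S, e :: es, S' => E e.1 e.2 ∧ e.2 ∈ S ∧ ChainP E (insert e.1 S) es S'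

lemma chainP_append {E : Fin n → Fin n → Prop} :
    ∀ (es : List (Fin n × Fin n)) (S S' S'' : Set (Fin n)) (es2 : List (Fin n × Fin n)),
    ChainP E S es S' → ChainP E S' es2 S'' → ChainP E S (es ++ es2) S'' := by
  intro es
  induction es with
  | nil => intro S S' S'' es2 h1 h2; rw [ChainP] at h1; subst h1; simpa using h2
  | cons e es ih =>
    intro S S' S'' es2 h1 h2
    obtain ⟨hE, hv, hc⟩ := h1
    exact ⟨hE, hv, ih _ _ _ _ hc h2⟩

lemma chainP_subset {E : Fin n → Fin n → Prop} :
    ∀ (es : List (Fin n × Fin n)) (S S' : Set (Fin n)),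
    ChainP E S es S' → S ⊆ S' := by
  intro es
  induction es with
  | nil => intro S S' h; rw [ChainP] at h; subst h; exact subset_rfl
  | cons e es ih =>
    intro S S' h
    exact (Set.subset_insert e.1 S).trans (ih _ _ h.2.2)

/-- growing influence from a path. -/
lemma pathGrow {E : Fin n → Fin n → Prop} {i0 : Fin n} :
    ∀ (L : ℕ) (i : Fin n) (S : Set (Fin n)), isPath E i i0 L → i0 ∈ S →
    ∃ es S', ChainP E S es S' ∧ i ∈ S' ∧ S ⊆ S' := by
  intro L
  induction L with
  | zero =>
    intro i S hp hS
    obtain ⟨f, h0, hL, _⟩ := hp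
    exact ⟨[], S, rfl, by rw [← h0, hL]; exact hS, subset_rfl⟩
  | succ L ih =>
    intro i S hp hS
    obtain ⟨f, h0, hL, hE⟩ := hp
    have hp' : isPath E (f 1) i0 L :=
      ⟨fun l => f (l + 1), rfl, hL, fun l hl => hE (l+1) (by omega)⟩
    obtain ⟨es, S', hc, hf1, hsub⟩ := ih (f 1) S hp' hS
    refine ⟨es ++ [(i, f 1)], insert i S', ?_, Set.mem_insert _ _, ?_⟩
    · refine chainP_append es S S' _ ([(i, f 1)]) hc ?_
      exact ⟨by rw [← h0]; exact hE 0 (by omega), hf1, rfl⟩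
    · exact hsub.trans (Set.subset_insert _ _)

lemma coverAll {E : Fin n → Fin n → Prop} {i0 : Fin n}
    (hconn : ∀ i, ∃ L, isPath E i i0 L) :
    ∃ es S', ChainP E {i0} es S' ∧ ∀ i, i ∈ S' := by
  suffices h : ∀ F : Finset (Fin n), ∃ es S', ChainP E {i0} es S' ∧ i0 ∈ S' ∧ ∀ i ∈ F, i ∈ S' by
    obtain ⟨es, S', h1, _, h3⟩ := h Finset.univ
    exact ⟨es, S', h1, fun i => h3 i (Finset.mem_univ i)⟩
  intro F
  induction F using Finset.induction with
  | empty => exact ⟨[], {i0}, rfl, rfl, by simp⟩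
  | @insert a F ha ih =>
    obtain ⟨es, S', h1, h2, h3⟩ := ih
    obtain ⟨L, hp⟩ := hconn _
    obtain ⟨es2, S'', hc2, ha, hsub⟩ := pathGrow L _ S' hp h2
    refine ⟨es ++ es2, S'', chainP_append _ _ _ _ _ h1 hc2, hsub h2, ?_⟩
    intro i hi
    rcases Finset.mem_insert.mp hi with h | h
    · subst h; exact ha
    · exact hsub (h3 i h)

/-- one multiplication step keeps nonnegativity and propagates column mass. -/
lemma prodStep {ε : ℝ} (hε0 : 0 < ε) {u v i0 : Fin n} {M P : Matrix (Fin n) (Fin n) ℝ}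
    (hM : GoodM ε u v M) (hP : ∀ a b, 0 ≤ P a b) :
    (∀ a b, 0 ≤ (M * P) a b) ∧ (∀ j, ε * P j i0 ≤ (M * P) j i0) ∧
      ε * P v i0 ≤ (M * P) u i0 := by
  have hnn : ∀ a b, 0 ≤ (M * P) a b := fun a b => by
    rw [Matrix.mul_apply]
    exact Finset.sum_nonneg fun l _ => mul_nonneg (hM.1.1 a l) (hP l b)
  refine ⟨hnn, fun j => ?_, ?_⟩
  · rw [Matrix.mul_apply]
    calc ε * P j i0 ≤ M j j * P j i0 := mul_le_mul_of_nonneg_right (hM.2.1 j) (hP j i0)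
      _ ≤ ∑ l, M j l * P l i0 :=
        Finset.single_le_sum (f := fun l => M j l * P l i0)
          (fun l _ => mul_nonneg (hM.1.1 j l) (hP l i0)) (Finset.mem_univ j)
  · rw [Matrix.mul_apply]
    calc ε * P v i0 ≤ M u v * P v i0 := mul_le_mul_of_nonneg_right hM.2.2 (hP v i0)
      _ ≤ ∑ l, M u l * P l i0 :=
        Finset.single_le_sum (f := fun l => M u l * P l i0)
          (fun l _ => mul_nonneg (hM.1.1 u l) (hP l i0)) (Finset.mem_univ v)

/-- iterating a chain of good matrices spreads column mass at `i0` to all of `S'`. -/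
lemma chainProd {ε : ℝ} (hε0 : 0 < ε) (i0 : Fin n) {E : Fin n → Fin n → Prop} :
    ∀ (es : List (Fin n × Fin n)) (S S' : Set (Fin n)) (Ms : List (Matrix (Fin n) (Fin n) ℝ)),
    ChainP E S es S' →
    List.Forall₂ (fun (e : Fin n × Fin n) M => GoodM ε e.1 e.2 M) es Ms →
    ∀ (P : Matrix (Fin n) (Fin n) ℝ), (∀ a b, 0 ≤ P a b) → ∀ c, 0 ≤ c →
    (∀ j ∈ S, c ≤ P j i0) →
    (∀ a b, 0 ≤ (Ms.foldl (fun Q M => M * Q) P) a b) ∧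
      ∀ j ∈ S', ε ^ es.length * c ≤ (Ms.foldl (fun Q M => M * Q) P) j i0 := by
  intro es
  induction es with
  | nil =>
    intro S S' Ms hch hf P hP c hc hS
    rw [ChainP] at hch
    subst hch
    rcases hf with _ | _
    simpa using ⟨hP, hS⟩
  | cons e es ih =>
    intro S S' Ms hch hf P hP c hc hS
    cases hf with
    | cons hM hf' =>
      rename_i M Ms'
      obtain ⟨hE, hv, hch'⟩ := hch
      obtain ⟨hnn, hdiag, hedge⟩ := prodStep hε0 hM hP
      have hS1 : ∀ j ∈ insert e.1 S, ε * c ≤ (M * P) j i0 := by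
        intro j hj
        rcases Set.mem_insert_iff.mp hj with h | h
        · subst h
          calc ε * c ≤ ε * P e.2 i0 :=
              mul_le_mul_of_nonneg_left (hS e.2 hv) (le_of_lt hε0)
            _ ≤ _ := hedge
        · calc ε * c ≤ ε * P j i0 := mul_le_mul_of_nonneg_left (hS j h) (le_of_lt hε0)
            _ ≤ _ := hdiag j
      have hrec := ih _ _ _ hch' hf' _ hnn (ε * c) (mul_nonneg (le_of_lt hε0) hc) hS1
      constructor
      · intro a b; simpa [List.foldl_cons] using hrec.1 a b
      · intro j hj
        have h2 := hrec.2 j hj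
        have hpow : ε ^ (e :: es).length * c = ε ^ es.length * (ε * c) := by
          rw [List.length_cons, pow_succ]; ring
        rw [hpow]
        simpa [List.foldl_cons] using h2

section Spread
variable [NeZero n]

/-- the spread (max minus min) of a vector. -/
def sprd (y : Fin n → ℝ) : ℝ :=
  Finset.univ.sup' (Finset.univ_nonempty) y - Finset.univ.inf' (Finset.univ_nonempty) y

lemma sum_le_coef_sup {c y : Fin n → ℝ} (hc : ∀ j, 0 ≤ c j) :
    ∑ j, c j * y j ≤ (∑ j, c j) * Finset.univ.sup' Finset.univ_nonempty y := by
  rw [Finset.sum_mul]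
  refine Finset.sum_le_sum fun j _ => ?_
  exact mul_le_mul_of_nonneg_left (Finset.le_sup' y (Finset.mem_univ j)) (hc j)

lemma coef_inf_le_sum {c y : Fin n → ℝ} (hc : ∀ j, 0 ≤ c j) :
    (∑ j, c j) * Finset.univ.inf' Finset.univ_nonempty y ≤ ∑ j, c j * y j := by
  rw [Finset.sum_mul]
  refine Finset.sum_le_sum fun j _ => ?_
  exact mul_le_mul_of_nonneg_left (Finset.inf'_le y (Finset.mem_univ j)) (hc j)

lemma mulVec_bounds {M : Matrix (Fin n) (Fin n) ℝ} (hM : StochM M) {δ : ℝ} (hδ : 0 ≤ δ)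
    {i0 : Fin n} (hcol : ∀ i, δ ≤ M i i0) (y : Fin n → ℝ) (i : Fin n) :
    M.mulVec y i ≤ δ * y i0 + (1 - δ) * Finset.univ.sup' Finset.univ_nonempty y ∧
    δ * y i0 + (1 - δ) * Finset.univ.inf' Finset.univ_nonempty y ≤ M.mulVec y i := by
  set c : Fin n → ℝ := fun j => M i j - δ * (if j = i0 then 1 else 0) with hc_def
  have hc : ∀ j, 0 ≤ c j := by
    intro j
    by_cases h : j = i0
    · subst h; simp [hc_def]; linarith [hcol i]
    · simp [hc_def, h]; exact hM.1 i j
  have hcsum : ∑ j, c j = 1 - δ := by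
    simp only [hc_def]
    rw [Finset.sum_sub_distrib, hM.2 i, ← Finset.mul_sum]
    simp
  have key : M.mulVec y i = δ * y i0 + ∑ j, c j * y j := by
    simp only [hc_def, Matrix.mulVec, dotProduct, sub_mul]
    rw [Finset.sum_sub_distrib]
    have : ∑ j, δ * (if j = i0 then (1:ℝ) else 0) * y j = δ * y i0 := by
      rw [Finset.sum_eq_single i0]
      · simp
      · intro b _ hb; simp [hb]
      · intro h; exact absurd (Finset.mem_univ i0) h
    rw [this]; ring
  constructor
  · rw [key]
    have := sum_le_coef_sup (y := y) hc
    rw [hcsum] at this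
    linarith
  · rw [key]
    have := coef_inf_le_sum (y := y) hc
    rw [hcsum] at this
    linarith

lemma sprd_contract {M : Matrix (Fin n) (Fin n) ℝ} (hM : StochM M) {δ : ℝ} (hδ : 0 ≤ δ)
    {i0 : Fin n} (hcol : ∀ i, δ ≤ M i i0) (y : Fin n → ℝ) :
    sprd (M.mulVec y) ≤ (1 - δ) * sprd y := by
  have hsup : Finset.univ.sup' Finset.univ_nonempty (M.mulVec y) ≤
      δ * y i0 + (1 - δ) * Finset.univ.sup' Finset.univ_nonempty y :=
    Finset.sup'_le _ _ fun i _ => (mulVec_bounds hM hδ hcol y i).1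
  have hinf : δ * y i0 + (1 - δ) * Finset.univ.inf' Finset.univ_nonempty y ≤
      Finset.univ.inf' Finset.univ_nonempty (M.mulVec y) :=
    Finset.le_inf' _ _ fun i _ => (mulVec_bounds hM hδ hcol y i).2
  unfold sprd
  have : (1-δ) * (Finset.univ.sup' Finset.univ_nonempty y -
      Finset.univ.inf' Finset.univ_nonempty y) =
      (δ * y i0 + (1 - δ) * Finset.univ.sup' Finset.univ_nonempty y) -
      (δ * y i0 + (1 - δ) * Finset.univ.inf' Finset.univ_nonempty y) := by ring
  rw [this]
  exact sub_le_sub hsup hinf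

lemma sprd_mono {M : Matrix (Fin n) (Fin n) ℝ} (hM : StochM M) (y : Fin n → ℝ)
    (i0 : Fin n) : sprd (M.mulVec y) ≤ sprd y := by
  have := sprd_contract (i0 := i0) hM le_rfl (fun i => hM.1 i i0) y
  simpa using this

lemma sprd_nonneg (y : Fin n → ℝ) : 0 ≤ sprd y := by
  unfold sprd
  rw [sub_nonneg]
  obtain ⟨i, hi⟩ := (Finset.univ_nonempty (α := Fin n))
  exact le_trans (Finset.inf'_le y hi) (Finset.le_sup' y hi)

lemma sup'_mulVec_le {M : Matrix (Fin n) (Fin n) ℝ} (hM : StochM M) (y : Fin n → ℝ) :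
    Finset.univ.sup' Finset.univ_nonempty (M.mulVec y) ≤
      Finset.univ.sup' Finset.univ_nonempty y := by
  obtain ⟨i0, _⟩ := (Finset.univ_nonempty (α := Fin n))
  refine Finset.sup'_le _ _ fun i _ => ?_
  have := (mulVec_bounds (i0 := i0) hM le_rfl (fun i => hM.1 i i0) y i).1
  linarith

lemma le_inf'_mulVec {M : Matrix (Fin n) (Fin n) ℝ} (hM : StochM M) (y : Fin n → ℝ) :
    Finset.univ.inf' Finset.univ_nonempty y ≤
      Finset.univ.inf' Finset.univ_nonempty (M.mulVec y) := by
  obtain ⟨i0, _⟩ := (Finset.univ_nonempty (α := Fin n))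
  refine Finset.le_inf' _ _ fun i _ => ?_
  have := (mulVec_bounds (i0 := i0) hM le_rfl (fun i => hM.1 i i0) y i).2
  linarith

end Spread

section Prob

instance matSing {n : ℕ} : MeasurableSingletonClass (Matrix (Fin n) (Fin n) ℝ) :=
  inferInstanceAs (MeasurableSingletonClass (∀ _ : Fin n, ∀ _ : Fin n, ℝ))

lemma le_lawW_of_mem {n : ℕ} (p α β γ : Fin n → Fin n → ℝ) (ε : ℝ) (u v : Fin n)
    (s : Set (Matrix (Fin n) (Fin n) ℝ)) :
    (ENNReal.ofReal (p u v * β u v / n) • Measure.dirac (Amat u v) +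
     ENNReal.ofReal (p u v * α u v / n) • Measure.dirac (Jmat ε u v) +
     ENNReal.ofReal (p u v * γ u v / n) • Measure.dirac (1 : Matrix (Fin n) (Fin n) ℝ)) s
      ≤ lawW p α β γ ε s := by
  unfold lawW
  rw [Measure.finset_sum_apply]
  have h1 : (∑ j, (ENNReal.ofReal (p u j * β u j / n) • Measure.dirac (Amat u j) +
     ENNReal.ofReal (p u j * α u j / n) • Measure.dirac (Jmat ε u j) +
     ENNReal.ofReal (p u j * γ u j / n) • Measure.dirac (1 : Matrix (Fin n) (Fin n) ℝ))) s
      ≤ ∑ i, (∑ j, (ENNReal.ofReal (p i j * β i j / n) • Measure.dirac (Amat i j) +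
        ENNReal.ofReal (p i j * α i j / n) • Measure.dirac (Jmat ε i j) +
        ENNReal.ofReal (p i j * γ i j / n) • Measure.dirac (1 : Matrix (Fin n) (Fin n) ℝ))) s := by
    exact Finset.single_le_sum (f := fun i => (∑ j, (ENNReal.ofReal (p i j * β i j / n) •
      Measure.dirac (Amat i j) +
      ENNReal.ofReal (p i j * α i j / n) • Measure.dirac (Jmat ε i j) +
      ENNReal.ofReal (p i j * γ i j / n) • Measure.dirac (1 : Matrix (Fin n) (Fin n) ℝ))) s)
      (fun i _ => zero_le) (Finset.mem_univ u)
  refine le_trans ?_ h1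
  rw [Measure.finset_sum_apply]
  exact Finset.single_le_sum (f := fun j => (ENNReal.ofReal (p u j * β u j / n) •
      Measure.dirac (Amat u j) +
      ENNReal.ofReal (p u j * α u j / n) • Measure.dirac (Jmat ε u j) +
      ENNReal.ofReal (p u j * γ u j / n) • Measure.dirac (1 : Matrix (Fin n) (Fin n) ℝ)) s)
      (fun j _ => zero_le) (Finset.mem_univ v)

lemma le_lawW_A {n : ℕ} (p α β γ : Fin n → Fin n → ℝ) (ε : ℝ) (u v : Fin n) :
    ENNReal.ofReal (p u v * β u v / n) ≤ lawW p α β γ ε {Amat u v} := by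
  refine le_trans ?_ (le_lawW_of_mem p α β γ ε u v {Amat u v})
  rw [Measure.add_apply, Measure.add_apply, Measure.smul_apply,
    Measure.dirac_apply_of_mem (Set.mem_singleton _)]
  simp only [smul_eq_mul, mul_one]
  exact le_add_of_le_of_nonneg (le_add_of_le_of_nonneg le_rfl (zero_le)) (zero_le)

lemma le_lawW_J {n : ℕ} (p α β γ : Fin n → Fin n → ℝ) (ε : ℝ) (u v : Fin n) :
    ENNReal.ofReal (p u v * α u v / n) ≤ lawW p α β γ ε {Jmat ε u v} := by
  refine le_trans ?_ (le_lawW_of_mem p α β γ ε u v {Jmat ε u v})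
  rw [Measure.add_apply, Measure.add_apply, Measure.smul_apply (s := {Jmat ε u v})
    (c := ENNReal.ofReal (p u v * α u v / n)),
    Measure.dirac_apply_of_mem (Set.mem_singleton _)]
  simp only [smul_eq_mul, mul_one]
  calc ENNReal.ofReal (p u v * α u v / n)
      ≤ _ + ENNReal.ofReal (p u v * α u v / n) := le_add_self
    _ ≤ _ + _ := le_add_of_le_of_nonneg le_rfl (zero_le)

/-- support of the law. -/
def suppW (n : ℕ) (ε : ℝ) : Set (Matrix (Fin n) (Fin n) ℝ) :=
  (⋃ i, ⋃ j, {Amat i j}) ∪ ((⋃ i, ⋃ j, {Jmat ε i j}) ∪ {1})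

lemma measurableSet_suppW {n : ℕ} {ε : ℝ} : MeasurableSet (suppW n ε) := by
  unfold suppW
  refine MeasurableSet.union ?_ (MeasurableSet.union ?_ (measurableSet_singleton _)) <;>
    exact MeasurableSet.iUnion fun i => MeasurableSet.iUnion fun j => measurableSet_singleton _

lemma lawW_compl_suppW {n : ℕ} (p α β γ : Fin n → Fin n → ℝ) (ε : ℝ) :
    lawW p α β γ ε (suppW n ε)ᶜ = 0 := by
  unfold lawW
  rw [Measure.finset_sum_apply]
  refine Finset.sum_eq_zero fun i _ => ?_
  rw [Measure.finset_sum_apply]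
  refine Finset.sum_eq_zero fun j _ => ?_
  have hA : Measure.dirac (Amat i j) (suppW n ε)ᶜ = 0 := by
    rw [Measure.dirac_apply' _ measurableSet_suppW.compl]
    apply Set.indicator_of_notMem
    simp only [Set.mem_compl_iff, not_not, suppW]
    exact Or.inl (Set.mem_iUnion.2 ⟨i, Set.mem_iUnion.2 ⟨j, rfl⟩⟩)
  have hJ : Measure.dirac (Jmat ε i j) (suppW n ε)ᶜ = 0 := by
    rw [Measure.dirac_apply' _ measurableSet_suppW.compl]
    apply Set.indicator_of_notMem
    simp only [Set.mem_compl_iff, not_not, suppW]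
    exact Or.inr (Or.inl (Set.mem_iUnion.2 ⟨i, Set.mem_iUnion.2 ⟨j, rfl⟩⟩))
  have hI : Measure.dirac (1 : Matrix (Fin n) (Fin n) ℝ) (suppW n ε)ᶜ = 0 := by
    rw [Measure.dirac_apply' _ measurableSet_suppW.compl]
    apply Set.indicator_of_notMem
    simp only [Set.mem_compl_iff, not_not, suppW]
    exact Or.inr (Or.inr rfl)
  rw [Measure.add_apply, Measure.add_apply, Measure.smul_apply, Measure.smul_apply,
    Measure.smul_apply, hA, hJ, hI]
  simp

lemma suppW_stoch {n : ℕ} {ε : ℝ} (hε0 : 0 < ε) (hε : ε ≤ 1/2)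
    {M : Matrix (Fin n) (Fin n) ℝ} (hM : M ∈ suppW n ε) :
    StochM M ∧ ∀ k, ε ≤ M k k := by
  rcases hM with h | h | h
  · obtain ⟨i, hi⟩ := Set.mem_iUnion.1 h
    obtain ⟨j, hj⟩ := Set.mem_iUnion.1 hi
    rw [Set.mem_singleton_iff] at hj
    subst hj
    exact ⟨stoch_Amat i j, fun k => Amat_diag hε i j k⟩
  · obtain ⟨i, hi⟩ := Set.mem_iUnion.1 h
    obtain ⟨j, hj⟩ := Set.mem_iUnion.1 hi
    rw [Set.mem_singleton_iff] at hj
    subst hj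
    exact ⟨stoch_Jmat hε0 hε i j, Jmat_diag hε0 hε i j⟩
  · rw [Set.mem_singleton_iff] at h
    subst h
    refine ⟨stoch_one, fun k => ?_⟩
    rw [Matrix.one_apply_eq]
    linarith

end Prob

section Phi
variable {Ω : Type*}

/-- the running product of update matrices. -/
def PhiW (W : ℕ → Ω → Matrix (Fin n) (Fin n) ℝ) : ℕ → Ω → Matrix (Fin n) (Fin n) ℝ
  | 0 => fun _ => 1
  | (k+1) => fun ω => W k ω * PhiW W k ω

lemma stoch_foldl : ∀ (Ms : List (Matrix (Fin n) (Fin n) ℝ)), (∀ M ∈ Ms, StochM M) →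
    ∀ P, StochM P → StochM (Ms.foldl (fun Q M => M * Q) P) := by
  intro Ms
  induction Ms with
  | nil => intro _ P hP; simpa using hP
  | cons M Ms ih =>
    intro h P hP
    rw [List.foldl_cons]
    exact ih (fun M' hM' => h M' (List.mem_cons_of_mem _ hM'))
      _ (stoch_mul (h M (List.mem_cons_self)) hP)

lemma phiW_window {W : ℕ → Ω → Matrix (Fin n) (Fin n) ℝ} {ω : Ω}
    (L : List (Matrix (Fin n) (Fin n) ℝ)) (a : ℕ)
    (hω : ∀ t, (ht : t < L.length) → W (a + t) ω = L.get ⟨t, ht⟩) :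
    ∀ t, t ≤ L.length →
      PhiW W (a + t) ω = ((L.take t).foldl (fun Q M => M * Q) 1) * PhiW W a ω := by
  intro t
  induction t with
  | zero => intro _; simp
  | succ t ih =>
    intro ht
    have ht' : t < L.length := by omega
    have h1 : L.take (t+1) = L.take t ++ [L.get ⟨t, ht'⟩] := by
      rw [List.take_succ]
      congr
      simp [List.getElem?_eq_getElem ht']
    rw [show a + (t+1) = (a+t) + 1 from rfl]
    show W (a+t) ω * PhiW W (a+t) ω = _
    rw [hω t ht', ih (le_of_lt ht'), h1, List.foldl_append]
    simp [mul_assoc]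
end Phi

section Consensus
variable [NeZero n]

lemma consensus_seq {y : ℕ → Fin n → ℝ} {δ : ℝ} (hδ0 : 0 < δ) (hδ1 : δ ≤ 1)
    (hsup : ∀ k, Finset.univ.sup' Finset.univ_nonempty (y (k+1)) ≤
      Finset.univ.sup' Finset.univ_nonempty (y k))
    (hinf : ∀ k, Finset.univ.inf' Finset.univ_nonempty (y k) ≤
      Finset.univ.inf' Finset.univ_nonempty (y (k+1)))
    (hfire : ∀ k, ∃ a b, k ≤ a ∧ a ≤ b ∧ sprd (y b) ≤ (1-δ) * sprd (y a)) :
    ∃ c, ∀ i, Tendsto (fun k => y k i) atTop (nhds c) := by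
  set Ms : ℕ → ℝ := fun k => Finset.univ.sup' Finset.univ_nonempty (y k) with hMs
  set ms : ℕ → ℝ := fun k => Finset.univ.inf' Finset.univ_nonempty (y k) with hms
  have hManti : Antitone Ms := antitone_nat_of_succ_le hsup
  have hmmono : Monotone ms := monotone_nat_of_le_succ hinf
  have hle : ∀ k, ms k ≤ Ms k := by
    intro k
    obtain ⟨i, hi⟩ := (Finset.univ_nonempty (α := Fin n))
    exact le_trans (Finset.inf'_le _ hi) (Finset.le_sup' _ hi)
  have hMbdd : BddBelow (Set.range Ms) := by
    refine ⟨ms 0, ?_⟩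
    rintro _ ⟨k, rfl⟩
    exact le_trans (hmmono (Nat.zero_le k)) (hle k)
  have hmbdd : BddAbove (Set.range ms) := by
    refine ⟨Ms 0, ?_⟩
    rintro _ ⟨k, rfl⟩
    exact le_trans (hle k) (hManti (Nat.zero_le k))
  have hMtend : Tendsto Ms atTop (nhds (⨅ k, Ms k)) := tendsto_atTop_ciInf hManti hMbdd
  have hmtend : Tendsto ms atTop (nhds (⨆ k, ms k)) := tendsto_atTop_ciSup hmmono hmbdd
  -- the spread tends to zero
  have hsprd : ∀ k, sprd (y k) = Ms k - ms k := fun k => rfl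
  have hsanti : Antitone (fun k => sprd (y k)) := fun a b hab => by
    show sprd (y b) ≤ sprd (y a)
    rw [hsprd, hsprd]
    exact sub_le_sub (hManti hab) (hmmono hab)
  have hs0 : ∀ k, 0 ≤ sprd (y k) := fun k => sprd_nonneg _
  -- iterate the contraction
  have hiter : ∀ K : ℕ, ∃ k, sprd (y k) ≤ (1-δ)^K * sprd (y 0) := by
    intro K
    induction K with
    | zero => exact ⟨0, by simp⟩
    | succ K ih =>
      obtain ⟨k, hk⟩ := ih
      obtain ⟨a, b, hka, hab, hcon⟩ := hfire k
      refine ⟨b, ?_⟩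
      calc sprd (y b) ≤ (1-δ) * sprd (y a) := hcon
        _ ≤ (1-δ) * ((1-δ)^K * sprd (y 0)) := by
            refine mul_le_mul_of_nonneg_left ?_ (by linarith)
            exact le_trans (hsanti hka) hk
        _ = (1-δ)^(K+1) * sprd (y 0) := by ring
  have hstend : Tendsto (fun k => sprd (y k)) atTop (nhds ((⨅ k, Ms k) - (⨆ k, ms k))) := by
    simpa [hsprd] using hMtend.sub hmtend
  have heq : (⨅ k, Ms k) = (⨆ k, ms k) := by
    have hge : 0 ≤ (⨅ k, Ms k) - (⨆ k, ms k) :=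
      ge_of_tendsto' hstend hs0 |>.trans_eq rfl |> (fun h => h)
    have hle2 : (⨅ k, Ms k) - (⨆ k, ms k) ≤ 0 := by
      have hlim : Tendsto (fun K : ℕ => (1-δ)^K * sprd (y 0)) atTop (nhds 0) := by
        have h1 : Tendsto (fun K : ℕ => (1-δ)^K) atTop (nhds 0) :=
          tendsto_pow_atTop_nhds_zero_of_lt_one (by linarith) (by linarith)
        simpa using h1.mul_const (sprd (y 0))
      refine ge_of_tendsto' hlim fun K => ?_
      obtain ⟨k, hk⟩ := hiter K
      have : (⨅ k', Ms k') - (⨆ k', ms k') ≤ sprd (y k) := by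
        rw [hsprd]
        refine sub_le_sub ?_ ?_
        · exact ciInf_le hMbdd k
        · exact le_ciSup hmbdd k
      linarith
    linarith
  refine ⟨⨆ k, ms k, fun i => ?_⟩
  exact tendsto_of_tendsto_of_tendsto_of_le_of_le hmtend (heq ▸ hMtend)
    (fun k => Finset.inf'_le _ (Finset.mem_univ i))
    (fun k => Finset.le_sup' _ (Finset.mem_univ i))

end Consensus

lemma chainP_edges {E : Fin n → Fin n → Prop} :
    ∀ (es : List (Fin n × Fin n)) (S S' : Set (Fin n)),
    ChainP E S es S' → ∀ e ∈ es, E e.1 e.2 := by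
  intro es
  induction es with
  | nil => intro S S' _ e he; simp at he
  | cons e' es ih =>
    intro S S' h e he
    rcases List.mem_cons.mp he with rfl | hmem
    · exact h.1
    · exact ih _ _ h.2.2 e hmem


/-- Theorem 1: under Assumptions 1–3, the beliefs converge with probability one
to a common (random) consensus value `x̄`, which is a convex combination
`Σ_j π_j x_j(0)` of the initial beliefs, with `π` a random stochastic vector. -/
theorem stmt_2 {n : ℕ} (hn : 2 ≤ n)
    (p α β γ : Fin n → Fin n → ℝ)
    -- Assumption 1 (meeting probabilities)
    (hp_diag : ∀ i, p i i = 0) (hp_nonneg : ∀ i j, 0 ≤ p i j) (hp_row : ∀ i, ∑ j, p i j = 1)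
    -- Assumption 2 (connectivity of E = {(i,j) | p_ij > 0})
    (hconn : ∀ i j : Fin n, ∃ L, isPath (fun a b => 0 < p a b) i j L)
    -- Assumption 3 (interaction probabilities)
    (hα : ∀ i j, 0 ≤ α i j) (hβ : ∀ i j, 0 ≤ β i j) (hγ : ∀ i j, 0 ≤ γ i j)
    (habg : ∀ i j, α i j + β i j + γ i j = 1)
    (hint : ∀ i j, 0 < p i j → 0 < β i j + α i j)
    (ε : ℝ) (hε0 : 0 < ε) (hε : ε ≤ 1 / 2)
    -- the i.i.d. random update matrices
    {Ω : Type*} [MeasureSpace Ω] [IsProbabilityMeasure (ℙ : Measure Ω)]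
    (W : ℕ → Ω → Matrix (Fin n) (Fin n) ℝ)
    (hWmeas : ∀ k, Measurable (W k))
    (hWlaw : ∀ k, Measure.map (W k) ℙ = lawW p α β γ ε)
    (hWindep : iIndepFun (m := fun _ => matMeas) W ℙ)
    -- the belief process
    (x0 : Fin n → ℝ) (x : ℕ → Ω → Fin n → ℝ)
    (hx0 : ∀ ω, x 0 ω = x0)
    (hxrec : ∀ k ω, x (k + 1) ω = (W k ω).mulVec (x k ω)) :
    ∃ xbar : Ω → ℝ, ∃ π : Ω → Fin n → ℝ, Measurable xbar ∧ Measurable π ∧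
      ∀ᵐ ω ∂(ℙ : Measure Ω),
        (∀ i, Tendsto (fun k => x k ω i) atTop (nhds (xbar ω))) ∧
        xbar ω = ∑ j, π ω j * x0 j ∧
        (∀ j, 0 ≤ π ω j) ∧ ∑ j, π ω j = 1 := by
  classical
  haveI : NeZero n := ⟨by omega⟩
  have hnR : (0:ℝ) < n := by exact_mod_cast (by omega : 0 < n)
  set E : Fin n → Fin n → Prop := fun a b => 0 < p a b with hE
  set i0 : Fin n := ⟨0, by omega⟩ with hi0
  set i1 : Fin n := ⟨1, by omega⟩ with hi1
  obtain ⟨es, S', hchain, hall⟩ := coverAll (E := E) (i0 := i0) (fun i => hconn i i0)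
  have hedges : ∀ e ∈ es, 0 < p e.1 e.2 := chainP_edges es _ _ hchain
  set T := es.length with hT
  have hTpos : 0 < T := by
    rcases hes : es with _ | ⟨e, es'⟩
    · exfalso
      rw [hes, ChainP] at hchain
      subst hchain
      have h1 := hall i1
      rw [Set.mem_singleton_iff] at h1
      have : (1 : ℕ) = 0 := congrArg Fin.val h1
      omega
    · rw [hT, hes]; simp
  -- per-edge choice of matrix and probability weight
  set Me : Fin n × Fin n → Matrix (Fin n) (Fin n) ℝ :=
    fun e => if 0 < β e.1 e.2 then Amat e.1 e.2 else Jmat ε e.1 e.2 with hMe_def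
  set qe : Fin n × Fin n → ℝ :=
    fun e => if 0 < β e.1 e.2 then p e.1 e.2 * β e.1 e.2 / n
             else p e.1 e.2 * α e.1 e.2 / n with hqe_def
  have hMe : ∀ e : Fin n × Fin n, 0 < p e.1 e.2 →
      GoodM ε e.1 e.2 (Me e) ∧ 0 < qe e ∧
      ENNReal.ofReal (qe e) ≤ lawW p α β γ ε {Me e} ∧ Me e ∈ suppW n ε := by
    intro e he
    have hne : e.1 ≠ e.2 := by
      intro h
      rw [h] at he
      exact absurd (hp_diag e.2) (ne_of_gt he)
    by_cases hb : 0 < β e.1 e.2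
    · refine ⟨?_, ?_, ?_, ?_⟩
      · simp only [hMe_def, if_pos hb]
        exact ⟨stoch_Amat _ _, fun k => Amat_diag hε _ _ k, Amat_edge hε hne⟩
      · simp only [hqe_def, if_pos hb]
        positivity
      · simp only [hMe_def, hqe_def, if_pos hb]
        exact le_lawW_A p α β γ ε e.1 e.2
      · simp only [hMe_def, if_pos hb, suppW]
        exact Or.inl (Set.mem_iUnion.2 ⟨e.1, Set.mem_iUnion.2 ⟨e.2, rfl⟩⟩)
    · have hb0 : β e.1 e.2 = 0 := le_antisymm (not_lt.mp hb) (hβ e.1 e.2)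
      have ha : 0 < α e.1 e.2 := by
        have := hint e.1 e.2 he
        linarith
      refine ⟨?_, ?_, ?_, ?_⟩
      · simp only [hMe_def, if_neg hb]
        exact ⟨stoch_Jmat hε0 hε _ _, fun k => Jmat_diag hε0 hε _ _ k, Jmat_edge hε hne⟩
      · simp only [hqe_def, if_neg hb]
        positivity
      · simp only [hMe_def, hqe_def, if_neg hb]
        exact le_lawW_J p α β γ ε e.1 e.2
      · simp only [hMe_def, if_neg hb, suppW]
        exact Or.inr (Or.inl (Set.mem_iUnion.2 ⟨e.1, Set.mem_iUnion.2 ⟨e.2, rfl⟩⟩))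
  -- the program
  set Ms : List (Matrix (Fin n) (Fin n) ℝ) := es.map Me with hMs_def
  have hMsLen : Ms.length = T := by rw [hMs_def, List.length_map]
  set prog : ℕ → Matrix (Fin n) (Fin n) ℝ :=
    fun t => if h : t < T then Me (es.get ⟨t, h⟩) else 1 with hprog_def
  have hprogget : ∀ t (h : t < Ms.length), Ms.get ⟨t, h⟩ = prog t := by
    intro t h
    have ht : t < T := by rwa [hMsLen] at h
    rw [hprog_def]
    simp only [dif_pos ht]
    show (es.map Me).get ⟨t, h⟩ = _
    simp [List.get_eq_getElem, List.getElem_map]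
  have hF2 : List.Forall₂ (fun (e : Fin n × Fin n) M => GoodM ε e.1 e.2 M) es Ms := by
    rw [hMs_def, List.forall₂_map_right_iff]
    exact List.forall₂_same.2 fun e he => (hMe e (hedges e he)).1
  set Qw : Matrix (Fin n) (Fin n) ℝ := Ms.foldl (fun Q M => M * Q) 1 with hQw_def
  have hQstoch : StochM Qw := by
    refine stoch_foldl Ms ?_ 1 stoch_one
    intro M hM
    rw [hMs_def, List.mem_map] at hM
    obtain ⟨e, he, rfl⟩ := hM
    exact ((hMe e (hedges e he)).1).1
  set δ : ℝ := ε ^ T with hδ_def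
  have hδ0 : 0 < δ := pow_pos hε0 T
  have hδ1 : δ ≤ 1 := pow_le_one₀ (le_of_lt hε0) (by linarith)
  have hQcol : ∀ j, δ ≤ Qw j i0 := by
    have h := chainProd hε0 i0 es {i0} S' Ms hchain hF2 1
      (fun a b => stoch_one.1 a b) 1 zero_le_one ?hS
    case hS =>
      intro j hj
      rw [Set.mem_singleton_iff] at hj
      subst hj
      rw [Matrix.one_apply_eq]
    intro j
    have := h.2 j (hall j)
    rw [mul_one] at this
    exact this
  -- window events
  set Bev : ℕ → Set Ω := fun m => ⋂ t ∈ Finset.range T, (W (m*T + t)) ⁻¹' {prog t}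
    with hBev_def
  have hBmeas : ∀ m, MeasurableSet (Bev m) := fun m =>
    MeasurableSet.biInter (Finset.range T).countable_toSet
      (fun t _ => (hWmeas _) (measurableSet_singleton _))
  have hsingle : ∀ (k : ℕ) (M : Matrix (Fin n) (Fin n) ℝ),
      ℙ (W k ⁻¹' {M}) = lawW p α β γ ε {M} := by
    intro k M
    rw [← hWlaw k, Measure.map_apply (hWmeas k) (measurableSet_singleton _)]
  have hprodF : ∀ (S : Finset ℕ) (sets : ℕ → Set (Matrix (Fin n) (Fin n) ℝ)),
      (∀ k, MeasurableSet (sets k)) →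
      ℙ (⋂ k ∈ S, W k ⁻¹' sets k) = ∏ k ∈ S, ℙ (W k ⁻¹' sets k) := by
    intro S sets hsets
    exact hWindep.measure_inter_preimage_eq_mul S (fun k _ => hsets k)
  -- description of the blocks
  set blk : ℕ → Finset ℕ := fun m => (Finset.range T).image (fun t => m*T + t) with hblk_def
  have hblk_mem : ∀ m k, k ∈ blk m ↔ ∃ t, t < T ∧ k = m*T + t := by
    intro m k
    simp only [hblk_def, Finset.mem_image, Finset.mem_range]
    constructor
    · rintro ⟨t, ht, rfl⟩; exact ⟨t, ht, rfl⟩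
    · rintro ⟨t, ht, rfl⟩; exact ⟨t, ht, rfl⟩
  have hmod : ∀ m t, t < T → (m*T + t) % T = t := by
    intro m t ht
    rw [Nat.mul_comm, Nat.mul_add_mod]
    exact Nat.mod_eq_of_lt ht
  have hBev_eq : ∀ m, Bev m = ⋂ k ∈ blk m, W k ⁻¹' {prog (k % T)} := by
    intro m
    rw [hBev_def]
    ext ω
    simp only [Set.mem_iInter, Finset.mem_range, hblk_mem]
    constructor
    · rintro h k ⟨t, ht, rfl⟩
      rw [hmod m t ht]
      exact h t ht
    · intro h t ht
      have := h (m*T + t) ⟨t, ht, rfl⟩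
      rwa [hmod m t ht] at this
  have hBev_prob : ∀ m, ℙ (Bev m) = ∏ t ∈ Finset.range T, ℙ (W (m*T+t) ⁻¹' {prog t}) := by
    intro m
    rw [hBev_eq m, hprodF _ _ (fun k => measurableSet_singleton _)]
    rw [hblk_def, Finset.prod_image ?inj]
    case inj =>
      intro a _ b _ hab
      simp only at hab
      omega
    refine Finset.prod_congr rfl fun t ht => ?_
    rw [hmod m t (Finset.mem_range.mp ht)]
  -- lower bound for the window probability
  set qp : ℕ → ENNReal := fun t => if h : t < T then ENNReal.ofReal (qe (es.get ⟨t, h⟩)) else 1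
    with hqp_def
  set q0 : ENNReal := ∏ t ∈ Finset.range T, qp t with hq0_def
  have hqp_pos : ∀ t, qp t ≠ 0 := by
    intro t
    by_cases h : t < T
    · simp only [hqp_def, dif_pos h, ne_eq, ENNReal.ofReal_eq_zero, not_le]
      exact (hMe _ (hedges _ (List.get_mem es _))).2.1
    · simp [hqp_def, dif_neg h]
  have hq0_pos : q0 ≠ 0 := by
    rw [hq0_def, Finset.prod_ne_zero_iff]
    exact fun t _ => hqp_pos t
  have hBev_lb : ∀ m, q0 ≤ ℙ (Bev m) := by
    intro m
    rw [hBev_prob m, hq0_def]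
    refine Finset.prod_le_prod' fun t ht => ?_
    have htT : t < T := Finset.mem_range.mp ht
    rw [hsingle]
    have hpg : prog t = Me (es.get ⟨t, htT⟩) := by rw [hprog_def]; simp [dif_pos htT]
    rw [hqp_def, hpg]
    simp only [dif_pos htT]
    exact (hMe _ (hedges _ (List.get_mem es _))).2.2.1
  -- mutual independence of the window events
  have hdisj : ∀ (s : Finset ℕ), Set.PairwiseDisjoint ↑s blk := by
    intro s m hm m' hm' hne
    refine Finset.disjoint_left.2 fun k hk hk' => ?_
    rw [hblk_mem] at hk hk'
    obtain ⟨t, ht, rfl⟩ := hk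
    obtain ⟨t', ht', he⟩ := hk'
    have : m = m' := by
      rcases Nat.lt_or_ge m m' with h | h
      · nlinarith [Nat.mul_le_mul_right T (Nat.succ_le_of_lt h)]
      · rcases Nat.lt_or_ge m' m with h2 | h2
        · nlinarith [Nat.mul_le_mul_right T (Nat.succ_le_of_lt h2)]
        · omega
    exact hne this
  have hindepB : iIndepSet Bev ℙ := by
    rw [iIndepSet_iff_meas_biInter hBmeas]
    intro s
    have h1 : (⋂ m ∈ s, Bev m) = ⋂ k ∈ s.biUnion blk, W k ⁻¹' {prog (k % T)} := by
      ext ω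
      simp only [Set.mem_iInter, Finset.mem_biUnion]
      constructor
      · rintro h k ⟨m, hm, hk⟩
        have := h m hm
        rw [hBev_eq m] at this
        exact Set.mem_iInter₂.mp this k hk
      · intro h m hm
        rw [hBev_eq m]
        exact Set.mem_iInter₂.mpr fun k hk => h k ⟨m, hm, hk⟩
    rw [h1, hprodF _ _ (fun k => measurableSet_singleton _),
      Finset.prod_biUnion (hdisj s)]
    refine Finset.prod_congr rfl fun m hm => ?_
    rw [hBev_eq m, hprodF _ _ (fun k => measurableSet_singleton _)]
  have hsum : (∑' m, ℙ (Bev m)) = (⊤ : ENNReal) := by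
    rw [eq_top_iff]
    calc (⊤ : ENNReal) = ∑' _ : ℕ, q0 := (ENNReal.tsum_const_eq_top_of_ne_zero hq0_pos).symm
      _ ≤ ∑' m, ℙ (Bev m) := ENNReal.tsum_le_tsum hBev_lb
  have hlimsup : ℙ (limsup Bev atTop) = 1 := measure_limsup_eq_one hBmeas hindepB hsum
  have hBae : ∀ᵐ ω ∂(ℙ : Measure Ω), ω ∈ limsup Bev atTop := by
    have hm : MeasurableSet (limsup Bev atTop) := by
      exact MeasurableSet.measurableSet_limsup hBmeas
    rw [ae_iff]
    have : {ω | ¬ ω ∈ limsup Bev atTop} = (limsup Bev atTop)ᶜ := rfl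
    rw [this, measure_compl hm (measure_ne_top _ _), hlimsup, measure_univ, tsub_self]
  have hGae : ∀ᵐ ω ∂(ℙ : Measure Ω), ∀ k, W k ω ∈ suppW n ε := by
    rw [ae_all_iff]
    intro k
    have h0 : ℙ (W k ⁻¹' (suppW n ε)ᶜ) = 0 := by
      rw [← Measure.map_apply (hWmeas k) measurableSet_suppW.compl, hWlaw k,
        lawW_compl_suppW]
    rw [ae_iff]
    convert h0 using 2
    exact rfl
  -- measurability
  have hWentry : ∀ (k : ℕ) (a b : Fin n), Measurable fun ω => W k ω a b := fun k a b =>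
    (measurable_pi_apply b).comp ((measurable_pi_apply a).comp (hWmeas k))
  have hxmeas : ∀ (k : ℕ) (i : Fin n), Measurable fun ω => x k ω i := by
    intro k
    induction k with
    | zero =>
      intro i
      have h : (fun ω => x 0 ω i) = fun _ => x0 i := by funext ω; rw [hx0]
      rw [h]; exact measurable_const
    | succ k ih =>
      intro i
      have h : (fun ω => x (k+1) ω i) = fun ω => ∑ l, W k ω i l * x k ω l := by
        funext ω; rw [hxrec]; rfl
      rw [h]
      exact Finset.measurable_sum _ fun l _ => (hWentry k i l).mul (ih l)
  have hPhimeas : ∀ (k : ℕ) (a b : Fin n), Measurable fun ω => PhiW W k ω a b := by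
    intro k
    induction k with
    | zero => intro a b; exact measurable_const
    | succ k ih =>
      intro a b
      have h : (fun ω => PhiW W (k+1) ω a b) = fun ω => ∑ l, W k ω a l * PhiW W k ω l b := by
        funext ω
        show (W k ω * PhiW W k ω) a b = _
        rw [Matrix.mul_apply]
      rw [h]
      exact Finset.measurable_sum _ fun l _ => (hWentry k a l).mul (ih l b)
  refine ⟨fun ω => liminf (fun k => x k ω i1) atTop,
    fun ω j => liminf (fun k => PhiW W k ω i1 j) atTop, ?_, ?_, ?_⟩
  · exact Measurable.liminf fun k => hxmeas k i1
  · exact measurable_pi_lambda _ fun j => Measurable.liminf fun k => hPhimeas k i1 j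
  filter_upwards [hGae, hBae] with ω hG hB
  have hWstoch : ∀ k, StochM (W k ω) := fun k => (suppW_stoch hε0 hε (hG k)).1
  have hPhistoch : ∀ k, StochM (PhiW W k ω) := by
    intro k
    induction k with
    | zero => exact stoch_one
    | succ k ih => exact stoch_mul (hWstoch k) ih
  have hxPhi : ∀ k, x k ω = (PhiW W k ω).mulVec x0 := by
    intro k
    induction k with
    | zero => rw [hx0]; exact (Matrix.one_mulVec x0).symm
    | succ k ih =>
      rw [hxrec, ih]
      show (W k ω).mulVec ((PhiW W k ω).mulVec x0) = (W k ω * PhiW W k ω).mulVec x0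
      rw [Matrix.mulVec_mulVec]
  have hfreq : ∃ᶠ m in atTop, ω ∈ Bev m := mem_limsup_iff_frequently_mem.mp hB
  have hwin : ∀ m, ω ∈ Bev m → PhiW W (m*T + T) ω = Qw * PhiW W (m*T) ω := by
    intro m hm
    have hωt : ∀ t, (ht : t < Ms.length) → W (m*T + t) ω = Ms.get ⟨t, ht⟩ := by
      intro t ht
      have htT : t < T := by rwa [hMsLen] at ht
      rw [hprogget t ht]
      rw [hBev_def] at hm
      have h3 := Set.mem_iInter₂.mp hm t (Finset.mem_range.mpr htT)
      rwa [Set.mem_preimage, Set.mem_singleton_iff] at h3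
    have h := phiW_window Ms (m*T) hωt Ms.length le_rfl
    rw [List.take_length] at h
    rw [hMsLen] at h
    exact h
  have hcons : ∀ v : Fin n → ℝ, ∃ c, ∀ i,
      Tendsto (fun k => (PhiW W k ω).mulVec v i) atTop (nhds c) := by
    intro v
    have hystep : ∀ k, (PhiW W (k+1) ω).mulVec v
        = (W k ω).mulVec ((PhiW W k ω).mulVec v) := by
      intro k
      show (W k ω * PhiW W k ω).mulVec v = _
      rw [Matrix.mulVec_mulVec]
    refine consensus_seq hδ0 hδ1 (fun k => ?_) (fun k => ?_) (fun k => ?_)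
    · rw [hystep]; exact sup'_mulVec_le (hWstoch k) _
    · rw [hystep]; exact le_inf'_mulVec (hWstoch k) _
    · obtain ⟨m, hmk, hmB⟩ := frequently_atTop.mp hfreq k
      refine ⟨m*T, m*T + T, ?_, Nat.le_add_right _ _, ?_⟩
      · calc k ≤ m := hmk
          _ ≤ m * T := Nat.le_mul_of_pos_right m hTpos
      · have heq : (PhiW W (m*T + T) ω).mulVec v
            = Qw.mulVec ((PhiW W (m*T) ω).mulVec v) := by
          rw [hwin m hmB, ← Matrix.mulVec_mulVec]
        rw [heq]
        exact sprd_contract hQstoch (le_of_lt hδ0) hQcol _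
  obtain ⟨cx, hcx⟩ := hcons x0
  have hmvE : ∀ (M : Matrix (Fin n) (Fin n) ℝ) (i j : Fin n), M.mulVec (eVec j) i = M i j := by
    intro M i j
    simp [Matrix.mulVec, dotProduct, eVec, mul_ite]
  have hcj : ∀ j : Fin n, ∃ c, ∀ i, Tendsto (fun k => PhiW W k ω i j) atTop (nhds c) := by
    intro j
    obtain ⟨c, hc⟩ := hcons (eVec j)
    refine ⟨c, fun i => ?_⟩
    have := hc i
    simp only [hmvE] at this
    exact this
  choose cpi hcpi using hcj
  have hxtend : ∀ i, Tendsto (fun k => x k ω i) atTop (nhds cx) := by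
    intro i
    have h := hcx i
    have heq : (fun k => (PhiW W k ω).mulVec x0 i) = fun k => x k ω i := by
      funext k; rw [hxPhi k]
    rwa [heq] at h
  have hxbar_eq : liminf (fun k => x k ω i1) atTop = cx := (hxtend i1).liminf_eq
  have hpi_eq : ∀ j, liminf (fun k => PhiW W k ω i1 j) atTop = cpi j :=
    fun j => (hcpi j i1).liminf_eq
  have hsumform : (fun k => x k ω i1) = fun k => ∑ j, PhiW W k ω i1 j * x0 j := by
    funext k
    rw [hxPhi k]
    rfl
  refine ⟨fun i => ?_, ?_, fun j => ?_, ?_⟩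
  · show Tendsto _ atTop (nhds (liminf (fun k => x k ω i1) atTop))
    rw [hxbar_eq]
    exact hxtend i
  · show liminf (fun k => x k ω i1) atTop
      = ∑ j, liminf (fun k => PhiW W k ω i1 j) atTop * x0 j
    rw [hxbar_eq]
    have h1 : Tendsto (fun k => ∑ j, PhiW W k ω i1 j * x0 j) atTop
        (nhds (∑ j, cpi j * x0 j)) :=
      tendsto_finset_sum _ (fun j _ => (hcpi j i1).mul_const (x0 j))
    rw [← hsumform] at h1
    have h2 := tendsto_nhds_unique (hxtend i1) h1
    rw [h2]
    refine Finset.sum_congr rfl fun j _ => ?_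
    rw [hpi_eq j]
  · show 0 ≤ liminf (fun k => PhiW W k ω i1 j) atTop
    rw [hpi_eq j]
    exact ge_of_tendsto' (hcpi j i1) fun k => (hPhistoch k).1 i1 j
  · show (∑ j, liminf (fun k => PhiW W k ω i1 j) atTop) = 1
    have h1 : Tendsto (fun k => ∑ j, PhiW W k ω i1 j) atTop (nhds (∑ j, cpi j)) :=
      tendsto_finset_sum _ (fun j _ => hcpi j i1)
    have h2 : (fun k => ∑ j, PhiW W k ω i1 j) = fun _ => (1:ℝ) := by
      funext k; exact (hPhistoch k).2 i1
    rw [h2] at h1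
    have h3 := tendsto_nhds_unique h1 tendsto_const_nhds
    calc (∑ j, liminf (fun k => PhiW W k ω i1 j) atTop) = ∑ j, cpi j := by
          exact Finset.sum_congr rfl fun j _ => hpi_eq j
      _ = 1 := h3
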